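/- Let G be a topological group. Suppose that (a) there is exactly one left-invariant mean on Ub(rG) (G is uniquely amenable), and (b) every element of the topological centre of Meas(rG) is a uniform measure, i.e., every ξ ∈ Meas(rG) for which the map ν ↦ ξ ⋆ ν is continuous from Meas(rG) with the weak-* topology to itself is a uniform measure. Then G is precompact, i.e., the right uniformity of G is totally bounded. -/

import Mathlib

noncomputable section

open Filter Topology

/-- `f` is a bounded uniformly continuous real-valued function,
i.e. a member of `Ub(X)`. -/
def IsUb {X : Type*} [UniformSpace X] (f : X → ℝ) : Prop :=
  UniformContinuous f ∧ ∃ C : ℝ, ∀ x, |f x| ≤ C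

/-- Supremum norm of a real-valued function. -/
def supNorm {α : Type*} (f : α → ℝ) : ℝ :=
  sSup (Set.range fun x => |f x|)

/-- `μ` is (the restriction to `Ub(X)` of) a norm-continuous linear functional on `Ub(X)`,
i.e. a member of `Meas(X)`.  It is represented as a bare map on all functions;
only its values on `Ub(X)` are relevant. -/
def IsMeas {X : Type*} [UniformSpace X] (μ : (X → ℝ) → ℝ) : Prop :=
  (∀ f g : X → ℝ, IsUb f → IsUb g → μ (f + g) = μ f + μ g) ∧
  (∀ (c : ℝ) (f : X → ℝ), IsUb f → μ (c • f) = c * μ f) ∧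
  (∃ C : ℝ, ∀ f : X → ℝ, IsUb f → (∀ x, |f x| ≤ 1) → |μ f| ≤ C)

/-- The dual norm on `Meas(X)`:  `‖μ‖ = sup {|μ f| : f ∈ Ub(X), ‖f‖ ≤ 1}`. -/
def measNorm {X : Type*} [UniformSpace X] (μ : (X → ℝ) → ℝ) : ℝ :=
  sSup {r : ℝ | ∃ f : X → ℝ, IsUb f ∧ (∀ x, |f x| ≤ 1) ∧ r = |μ f|}

/-- `μ` is a positive functional:  `μ f ≥ 0` whenever `f ∈ Ub(X)` and `f ≥ 0`. -/
def IsPositive {X : Type*} [UniformSpace X] (μ : (X → ℝ) → ℝ) : Prop :=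
  ∀ f : X → ℝ, IsUb f → (∀ x, 0 ≤ f x) → 0 ≤ μ f

/-- `μ` is a *uniform measure*: on every norm-bounded uniformly equicontinuous set
`H ⊆ Ub(X)`, `μ` is continuous for the topology of pointwise convergence. -/
def IsUniformMeasure {X : Type*} [UniformSpace X] (μ : (X → ℝ) → ℝ) : Prop :=
  ∀ H : Set (X → ℝ),
    (∃ C : ℝ, ∀ f ∈ H, ∀ x, |f x| ≤ C) →
    H.UniformEquicontinuous →
    ∀ f₀ ∈ H, ∀ ε : ℝ, 0 < ε →
      ∃ (K : Finset X) (δ : ℝ), 0 < δ ∧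
        ∀ f ∈ H, (∀ x ∈ K, |f x - f₀ x| < δ) → |μ f - μ f₀| < ε

/-- A *semiuniform* function on `X × Y`, i.e. a member of `Ub(X ⋉ Y)` where `X ⋉ Y` is the
semiuniform product: `f` is bounded, the family of sections `x ↦ f (x, y)` (for `y ∈ Y`)
is uniformly equicontinuous on `X`, and every section `y ↦ f (x, y)` is uniformly
continuous on `Y`. -/
def Semiuniform {X Y : Type*} [UniformSpace X] [UniformSpace Y] (f : X × Y → ℝ) : Prop :=
  (∃ C : ℝ, ∀ p, |f p| ≤ C) ∧
  UniformEquicontinuous (fun y : Y => fun x : X => f (x, y)) ∧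
  ∀ x : X, UniformContinuous fun y : Y => f (x, y)

/-- The direct product `μ ⊗ ν`, evaluated at `f : X × Y → ℝ`:
`(μ ⊗ ν)(f) = μ (x ↦ ν (y ↦ f (x, y)))`. -/
def dirProd {X Y : Type*} (μ : (X → ℝ) → ℝ) (ν : (Y → ℝ) → ℝ) (f : X × Y → ℝ) : ℝ :=
  μ fun x => ν fun y => f (x, y)

/-- Convolution: `(μ ⋆ ν)(f) = μ (x ↦ ν (y ↦ f (x · y)))`. -/
def conv {G : Type*} [Mul G] (μ ν : (G → ℝ) → ℝ) : (G → ℝ) → ℝ :=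
  fun f => μ fun x => ν fun y => f (x * y)

/-- The weak-* topology on `Meas(X)`: the topology of pointwise convergence on `Ub(X)`. -/
def weakStarMeas (X : Type*) [UniformSpace X] :
    TopologicalSpace {ν : (X → ℝ) → ℝ // IsMeas ν} :=
  TopologicalSpace.induced
    (fun ν => fun f : {f : X → ℝ // IsUb f} => ν.1 f.1) Pi.topologicalSpace

open scoped Uniformity

section RealHelpers

variable {X : Type*} [UniformSpace X]

theorem ucReal_iff {f : X → ℝ} :
    UniformContinuous f ↔
      ∀ ε : ℝ, 0 < ε → ∃ U ∈ 𝓤 X, ∀ p : X × X, p ∈ U → |f p.1 - f p.2| < ε := by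
  constructor
  · intro h ε hε
    refine ⟨_, h (Metric.dist_mem_uniformity hε), ?_⟩
    intro p hp
    simpa [Real.dist_eq] using hp
  · intro h s hs
    obtain ⟨ε, hε, hεs⟩ := Metric.mem_uniformity_dist.1 hs
    obtain ⟨U, hU, hprop⟩ := h ε hε
    rw [Filter.mem_map]
    refine Filter.mem_of_superset hU ?_
    intro p hp
    exact hεs (by simpa [Real.dist_eq] using hprop p hp)

theorem isUb_const (c : ℝ) : IsUb (fun _ : X => c) :=
  ⟨uniformContinuous_const, ⟨|c|, fun _ => le_rfl⟩⟩

theorem IsUb.add {f g : X → ℝ} (hf : IsUb f) (hg : IsUb g) :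
    IsUb (fun x => f x + g x) := by
  obtain ⟨Cf, hCf⟩ := hf.2
  obtain ⟨Cg, hCg⟩ := hg.2
  refine ⟨?_, ⟨Cf + Cg, fun x => (abs_add_le _ _).trans (add_le_add (hCf x) (hCg x))⟩⟩
  rw [ucReal_iff]
  intro ε hε
  obtain ⟨U, hU, hUp⟩ := ucReal_iff.1 hf.1 (ε/2) (by linarith)
  obtain ⟨V, hV, hVp⟩ := ucReal_iff.1 hg.1 (ε/2) (by linarith)
  refine ⟨U ∩ V, Filter.inter_mem hU hV, fun p hp => ?_⟩
  have h1 := hUp p hp.1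
  have h2 := hVp p hp.2
  have : |(f p.1 + g p.1) - (f p.2 + g p.2)| ≤ |f p.1 - f p.2| + |g p.1 - g p.2| := by
    have := abs_add_le (f p.1 - f p.2) (g p.1 - g p.2)
    rw [show (f p.1 + g p.1) - (f p.2 + g p.2) = (f p.1 - f p.2) + (g p.1 - g p.2) by ring]
    exact this
  linarith

theorem IsUb.smul {f : X → ℝ} (hf : IsUb f) (c : ℝ) : IsUb (fun x => c * f x) := by
  obtain ⟨Cf, hCf⟩ := hf.2
  refine ⟨?_, ⟨|c| * Cf, fun x => by
    rw [abs_mul]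
    exact mul_le_mul_of_nonneg_left (hCf x) (abs_nonneg c)⟩⟩
  rw [ucReal_iff]
  intro ε hε
  obtain ⟨U, hU, hUp⟩ := ucReal_iff.1 hf.1 (ε / (|c| + 1)) (by positivity)
  refine ⟨U, hU, fun p hp => ?_⟩
  have h1 := hUp p hp
  have h2 : |c * f p.1 - c * f p.2| = |c| * |f p.1 - f p.2| := by
    rw [← abs_mul]; ring_nf
  have hc1 : (0:ℝ) < |c| + 1 := by positivity
  have : |c| * |f p.1 - f p.2| ≤ |c| * (ε / (|c| + 1)) :=
    mul_le_mul_of_nonneg_left h1.le (abs_nonneg c)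
  have : |c| * (ε / (|c| + 1)) < ε := by
    rw [div_eq_inv_mul, ← mul_assoc]
    have h3 : |c| * (|c| + 1)⁻¹ < 1 := by
      rw [mul_inv_lt_iff₀ hc1]
      linarith [abs_nonneg c]
    nlinarith
  linarith

theorem IsUb.neg {f : X → ℝ} (hf : IsUb f) : IsUb (fun x => -f x) := by
  have := hf.smul (-1)
  simpa using this

theorem IsUb.sub {f g : X → ℝ} (hf : IsUb f) (hg : IsUb g) :
    IsUb (fun x => f x - g x) := by
  have := hf.add hg.neg
  simpa [sub_eq_add_neg] using this

theorem IsUb.max {f g : X → ℝ} (hf : IsUb f) (hg : IsUb g) :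
    IsUb (fun x => max (f x) (g x)) := by
  obtain ⟨Cf, hCf⟩ := hf.2
  obtain ⟨Cg, hCg⟩ := hg.2
  refine ⟨?_, ⟨Max.max Cf Cg, fun x => ?_⟩⟩
  · rw [ucReal_iff]
    intro ε hε
    obtain ⟨U, hU, hUp⟩ := ucReal_iff.1 hf.1 ε hε
    obtain ⟨V, hV, hVp⟩ := ucReal_iff.1 hg.1 ε hε
    refine ⟨U ∩ V, Filter.inter_mem hU hV, fun p hp => ?_⟩
    have h0 := abs_max_sub_max_le_max (f p.1) (g p.1) (f p.2) (g p.2)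
    have h1 := hUp p hp.1
    have h2 := hVp p hp.2
    exact lt_of_le_of_lt h0 (max_lt h1 h2)
  · rcases le_total (f x) (g x) with h | h
    · simp only [show (fun x => Max.max (f x) (g x)) x = Max.max (f x) (g x) from rfl,
        max_eq_right h]
      exact le_trans (hCg x) (le_max_right _ _)
    · simp only [show (fun x => Max.max (f x) (g x)) x = Max.max (f x) (g x) from rfl,
        max_eq_left h]
      exact le_trans (hCf x) (le_max_left _ _)

theorem IsUb.min {f g : X → ℝ} (hf : IsUb f) (hg : IsUb g) :
    IsUb (fun x => min (f x) (g x)) := by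
  have h : IsUb (fun x => -Max.max (-f x) (-g x)) := (hf.neg.max hg.neg).neg
  have e : (fun x => Min.min (f x) (g x)) = fun x => -Max.max (-f x) (-g x) := by
    funext x; rw [← min_neg_neg]; simp
  rw [e]; exact h

end RealHelpers

section MeasHelpers

variable {X : Type*} [UniformSpace X] {μ : (X → ℝ) → ℝ}

theorem meas_add' (hμ : IsMeas μ) {f g : X → ℝ} (hf : IsUb f) (hg : IsUb g) :
    μ (fun x => f x + g x) = μ f + μ g :=
  hμ.1 f g hf hg

theorem meas_smul' (hμ : IsMeas μ) {f : X → ℝ} (hf : IsUb f) (c : ℝ) :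
    μ (fun x => c * f x) = c * μ f :=
  hμ.2.1 c f hf

theorem meas_zero (hμ : IsMeas μ) : μ (fun _ => 0) = 0 := by
  have h := hμ.2.1 0 (fun _ => (0:ℝ)) (isUb_const 0)
  have e : (0:ℝ) • (fun _ : X => (0:ℝ)) = fun _ : X => (0:ℝ) := by
    funext x; simp
  rw [e] at h
  simpa using h

theorem meas_neg' (hμ : IsMeas μ) {f : X → ℝ} (hf : IsUb f) :
    μ (fun x => -f x) = -μ f := by
  have h := meas_smul' hμ hf (-1)
  have e : (fun x => (-1 : ℝ) * f x) = fun x => -f x := by funext x; ring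
  rw [e] at h
  simpa using h

theorem meas_sub' (hμ : IsMeas μ) {f g : X → ℝ} (hf : IsUb f) (hg : IsUb g) :
    μ (fun x => f x - g x) = μ f - μ g := by
  have h := meas_add' hμ hf hg.neg
  have e : (fun x => f x + -g x) = fun x => f x - g x := by funext x; ring
  rw [e] at h
  rw [h, meas_neg' hμ hg]
  ring

theorem meas_const (hμ : IsMeas μ) (c : ℝ) :
    μ (fun _ => c) = c * μ (fun _ => 1) := by
  have h := hμ.2.1 c (fun _ => (1:ℝ)) (isUb_const 1)
  have e : c • (fun _ : X => (1:ℝ)) = fun _ : X => c := by funext x; simp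
  rw [e] at h
  exact h

theorem meas_bound (hμ : IsMeas μ) :
    ∃ C : ℝ, 0 ≤ C ∧ ∀ f : X → ℝ, IsUb f → ∀ B : ℝ, 0 ≤ B →
      (∀ x, |f x| ≤ B) → |μ f| ≤ C * B := by
  obtain ⟨C₀, hC₀⟩ := hμ.2.2
  refine ⟨max C₀ 0, le_max_right _ _, ?_⟩
  intro f hf B hB hfB
  rcases eq_or_lt_of_le hB with hB0 | hB0
  · have hf0 : f = fun _ => 0 := by
      funext x
      have := hfB x
      rw [← hB0] at this
      simpa using abs_nonpos_iff.1 this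
    rw [hf0, meas_zero hμ, ← hB0]
    simp
  · set g : X → ℝ := fun x => B⁻¹ * f x with hg
    have hgUb : IsUb g := hf.smul B⁻¹
    have hg1 : ∀ x, |g x| ≤ 1 := by
      intro x
      rw [hg]
      simp only [abs_mul, abs_inv, abs_of_pos hB0]
      rw [inv_mul_le_iff₀ hB0]
      simpa using hfB x
    have h1 : |μ g| ≤ C₀ := hC₀ g hgUb hg1
    have e : (fun x => B * g x) = f := by
      funext x; rw [hg]; field_simp
    have h2 : μ f = B * μ g := by
      rw [← e]; exact meas_smul' hμ hgUb B
    rw [h2, abs_mul, abs_of_pos hB0]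
    calc B * |μ g| ≤ B * C₀ := mul_le_mul_of_nonneg_left h1 hB0.le
    _ ≤ max C₀ 0 * B := by
        rw [mul_comm]
        exact mul_le_mul_of_nonneg_right (le_max_left _ _) hB0.le

theorem meas_mono (hμ : IsMeas μ) (hpos : IsPositive μ) {f g : X → ℝ}
    (hf : IsUb f) (hg : IsUb g) (h : ∀ x, f x ≤ g x) : μ f ≤ μ g := by
  have hd : IsUb (fun x => g x - f x) := hg.sub hf
  have h1 : 0 ≤ μ (fun x => g x - f x) := hpos _ hd (fun x => by linarith [h x])
  have h2 : μ (fun x => g x - f x) = μ g - μ f := meas_sub' hμ hg hf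
  linarith [h1, h2.symm ▸ h1]

theorem meas_finsetSum (hμ : IsMeas μ) {ι : Type*} (v : ι → X → ℝ) :
    ∀ s : Finset ι, (∀ i ∈ s, IsUb (v i)) →
    IsUb (fun x => ∑ i ∈ s, v i x) ∧ μ (fun x => ∑ i ∈ s, v i x) = ∑ i ∈ s, μ (v i) := by
  classical
  intro s
  induction s using Finset.induction_on with
  | empty =>
      intro _
      have e : (fun x => ∑ i ∈ (∅ : Finset ι), v i x) = fun _ : X => (0:ℝ) := by
        funext x; simp
      rw [e]
      exact ⟨isUb_const 0, by rw [meas_zero hμ]; simp⟩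
  | @insert a s ha ih =>
      intro hv
      have hva : IsUb (v a) := hv a (Finset.mem_insert_self a s)
      have hrest := ih (fun i hi => hv i (Finset.mem_insert_of_mem hi))
      have e : (fun x => ∑ i ∈ insert a s, v i x)
          = fun x => v a x + ∑ i ∈ s, v i x := by
        funext x; rw [Finset.sum_insert ha]
      rw [e]
      refine ⟨hva.add hrest.1, ?_⟩
      rw [meas_add' hμ hva hrest.1, hrest.2, Finset.sum_insert ha]

end MeasHelpers

section GroupAux

variable {G : Type*} [Group G] [UniformSpace G] {N : Filter G}

/-- membership of basic entourages -/
theorem mem_unif (hU : 𝓤 G = comap (fun p : G × G => p.2 / p.1) N)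
    {V : Set G} (hV : V ∈ N) : {p : G × G | p.2 / p.1 ∈ V} ∈ 𝓤 G := by
  rw [hU]; exact preimage_mem_comap hV

theorem ucr_iff (hU : 𝓤 G = comap (fun p : G × G => p.2 / p.1) N) {f : G → ℝ} :
    UniformContinuous f ↔
      ∀ ε : ℝ, 0 < ε → ∃ V ∈ N, ∀ x y : G, y / x ∈ V → |f x - f y| < ε := by
  rw [ucReal_iff]
  constructor
  · intro h ε hε
    obtain ⟨U, hUm, hprop⟩ := h ε hε
    rw [hU, Filter.mem_comap] at hUm
    obtain ⟨V, hVN, hsub⟩ := hUm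
    exact ⟨V, hVN, fun x y hxy => hprop (x, y) (hsub hxy)⟩
  · intro h ε hε
    obtain ⟨V, hVN, hprop⟩ := h ε hε
    exact ⟨{p : G × G | p.2 / p.1 ∈ V}, mem_unif hU hVN,
      fun p hp => hprop p.1 p.2 hp⟩

theorem IsUb.transRight (hU : 𝓤 G = comap (fun p : G × G => p.2 / p.1) N)
    {f : G → ℝ} (hf : IsUb f) (a : G) : IsUb (fun x => f (x * a)) := by
  obtain ⟨C, hC⟩ := hf.2
  refine ⟨?_, ⟨C, fun x => hC _⟩⟩
  rw [ucr_iff hU]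
  intro ε hε
  obtain ⟨V, hVN, hprop⟩ := (ucr_iff hU).1 hf.1 ε hε
  refine ⟨V, hVN, fun x y hxy => ?_⟩
  have : (y * a) / (x * a) = y / x := by
    simp [div_eq_mul_inv, mul_inv_rev, mul_assoc]
  exact hprop (x * a) (y * a) (by rw [this]; exact hxy)

theorem IsUb.transLeft (hU : 𝓤 G = comap (fun p : G × G => p.2 / p.1) N)
    (hconj : ∀ (a : G) (V : Set G), V ∈ N → ∃ V' ∈ N, ∀ v ∈ V', a * v * a⁻¹ ∈ V)
    {f : G → ℝ} (hf : IsUb f) (a : G) : IsUb (fun x => f (a * x)) := by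
  obtain ⟨C, hC⟩ := hf.2
  refine ⟨?_, ⟨C, fun x => hC _⟩⟩
  rw [ucr_iff hU]
  intro ε hε
  obtain ⟨V, hVN, hprop⟩ := (ucr_iff hU).1 hf.1 ε hε
  obtain ⟨V', hV'N, hV'⟩ := hconj a V hVN
  refine ⟨V', hV'N, fun x y hxy => ?_⟩
  have : (a * y) / (a * x) = a * (y / x) * a⁻¹ := by
    simp [div_eq_mul_inv, mul_inv_rev, mul_assoc]
  exact hprop (a * x) (a * y) (by rw [this]; exact hV' _ hxy)

/-- the "outer" function `x ↦ ν (y ↦ f (x y))` is in `Ub`. -/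
theorem outer_isUb (hU : 𝓤 G = comap (fun p : G × G => p.2 / p.1) N)
    (hconj : ∀ (a : G) (V : Set G), V ∈ N → ∃ V' ∈ N, ∀ v ∈ V', a * v * a⁻¹ ∈ V)
    {ν : (G → ℝ) → ℝ} (hν : IsMeas ν) {f : G → ℝ} (hf : IsUb f) :
    IsUb (fun x => ν (fun y => f (x * y))) := by
  obtain ⟨C, hC0, hCb⟩ := meas_bound hν
  obtain ⟨B, hB⟩ := hf.2
  have hB' : ∀ x, |f x| ≤ max B 0 := fun x => le_trans (hB x) (le_max_left _ _)
  constructor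
  · rw [ucr_iff hU]
    intro ε hε
    have hC1 : (0:ℝ) < C + 1 := by linarith
    obtain ⟨V, hVN, hprop⟩ := (ucr_iff hU).1 hf.1 (ε / (2 * (C + 1)))
      (by positivity)
    refine ⟨V, hVN, fun x y hxy => ?_⟩
    have hxUb : IsUb (fun z => f (x * z)) := hf.transLeft hU hconj x
    have hyUb : IsUb (fun z => f (y * z)) := hf.transLeft hU hconj y
    have hdiff : ν (fun z => f (x * z) - f (y * z))
        = ν (fun z => f (x * z)) - ν (fun z => f (y * z)) :=
      meas_sub' hν hxUb hyUb
    have hbd : ∀ z, |f (x * z) - f (y * z)| ≤ ε / (2 * (C + 1)) := by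
      intro z
      have : (y * z) / (x * z) = y / x := by
        simp [div_eq_mul_inv, mul_inv_rev, mul_assoc]
      exact le_of_lt (hprop (x * z) (y * z) (by rw [this]; exact hxy))
    have h1 : |ν (fun z => f (x * z) - f (y * z))| ≤ C * (ε / (2 * (C + 1))) :=
      hCb _ (hxUb.sub hyUb) _ (by positivity) hbd
    have h2 : C * (ε / (2 * (C + 1))) < ε := by
      rw [div_eq_inv_mul, ← mul_assoc]
      have : C * (2 * (C + 1))⁻¹ < 1 := by
        rw [mul_inv_lt_iff₀ (by linarith)]
        linarith
      nlinarith
    calc |ν (fun z => f (x * z)) - ν (fun z => f (y * z))|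
        = |ν (fun z => f (x * z) - f (y * z))| := by rw [hdiff]
      _ < ε := lt_of_le_of_lt h1 h2
  · refine ⟨C * max B 0, fun x => ?_⟩
    exact hCb _ (hf.transLeft hU hconj x) _ (le_max_right _ _) (fun z => hB' _)

end GroupAux

section MeanAux

variable {G : Type*} [Group G] [UniformSpace G] {N : Filter G}

def MeanProp {G : Type*} [Group G] [UniformSpace G] (m : (G → ℝ) → ℝ) : Prop :=
  IsMeas m ∧ IsPositive m ∧ m (fun _ => 1) = 1 ∧
    ∀ (x : G) (f : G → ℝ), IsUb f → m (fun y => f (x * y)) = m f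

/-- an invariant positive functional is a multiple of the unique mean -/
theorem scaled_mean
    (huniq : ∀ m m' : (G → ℝ) → ℝ, MeanProp m → MeanProp m' →
      ∀ f : G → ℝ, IsUb f → m f = m' f)
    {m : (G → ℝ) → ℝ} (hm : MeanProp m)
    {σ : (G → ℝ) → ℝ} (hσ : IsMeas σ) (hσPos : IsPositive σ)
    (hσInv : ∀ (a : G) (f : G → ℝ), IsUb f → σ (fun y => f (a * y)) = σ f) :
    ∀ f : G → ℝ, IsUb f → σ f = σ (fun _ => 1) * m f := by
  intro f hf
  set t : ℝ := σ (fun _ => 1) with ht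
  have ht0 : 0 ≤ t := hσPos _ (isUb_const 1) (fun _ => zero_le_one)
  rcases eq_or_lt_of_le ht0 with ht0' | ht0'
  · -- t = 0 : σ vanishes on Ub
    obtain ⟨B₀, hB₀⟩ := hf.2
    set B := max B₀ 0 with hBdef
    have hB : ∀ x, |f x| ≤ B := fun x => le_trans (hB₀ x) (le_max_left _ _)
    have hconstB : σ (fun _ => B) = 0 := by
      rw [meas_const hσ, ← ht, ← ht0']; ring
    have h1 : 0 ≤ σ (fun x => f x + B) :=
      hσPos _ (hf.add (isUb_const B)) (fun x => by
        have := abs_le.1 (hB x); linarith [this.1])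
    have h2 : 0 ≤ σ (fun x => B - f x) :=
      hσPos _ ((isUb_const B).sub hf) (fun x => by
        have := abs_le.1 (hB x); linarith [this.2])
    have e1 : σ (fun x => f x + B) = σ f + σ (fun _ => B) :=
      meas_add' hσ hf (isUb_const B)
    have e2 : σ (fun x => B - f x) = σ (fun _ => B) - σ f :=
      meas_sub' hσ (isUb_const B) hf
    rw [← ht0']
    have : σ f = 0 := by rw [hconstB] at e1 e2; linarith
    rw [this]; ring
  · -- t > 0 : normalize
    set m' : (G → ℝ) → ℝ := fun g => σ g / t with hm'
    have hm'prop : MeanProp m' := by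
      refine ⟨⟨?_, ?_, ?_⟩, ?_, ?_, ?_⟩
      · intro f₁ f₂ h₁ h₂
        simp only [hm', hσ.1 f₁ f₂ h₁ h₂]; ring
      · intro c f₁ h₁
        simp only [hm', hσ.2.1 c f₁ h₁]; ring
      · obtain ⟨C, hC⟩ := hσ.2.2
        refine ⟨C / t, fun f₁ h₁ hb => ?_⟩
        simp only [hm', abs_div, abs_of_pos ht0']
        have := hC f₁ h₁ hb
        gcongr
      · intro f₁ h₁ hpos
        exact div_nonneg (hσPos _ h₁ hpos) ht0
      · simp only [hm', ← ht]
        field_simp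
      · intro a f₁ h₁
        simp only [hm', hσInv a f₁ h₁]
    have := huniq m' m hm'prop hm f hf
    rw [hm'] at this
    field_simp at this
    rw [this]

end MeanAux

section Riesz

variable {G : Type*} [Group G] [UniformSpace G] {N : Filter G}

theorem invariant_rep
    (hU : 𝓤 G = comap (fun p : G × G => p.2 / p.1) N)
    (hconj : ∀ (a : G) (V : Set G), V ∈ N → ∃ V' ∈ N, ∀ v ∈ V', a * v * a⁻¹ ∈ V)
    (huniq : ∀ m m' : (G → ℝ) → ℝ, MeanProp m → MeanProp m' →
      ∀ f : G → ℝ, IsUb f → m f = m' f)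
    {m : (G → ℝ) → ℝ} (hm : MeanProp m)
    {ρ : (G → ℝ) → ℝ} (hρ : IsMeas ρ)
    (hρInv : ∀ (a : G) (f : G → ℝ), IsUb f → ρ (fun y => f (a * y)) = ρ f) :
    ∀ f : G → ℝ, IsUb f → ρ f = ρ (fun _ => 1) * m f := by
  classical
  obtain ⟨C, hC0, hCb⟩ := meas_bound hρ
  set S : (G → ℝ) → Set ℝ := fun f =>
    {r | ∃ g : G → ℝ, IsUb g ∧ (∀ x, 0 ≤ g x ∧ g x ≤ f x) ∧ r = ρ g} with hS
  set p : (G → ℝ) → ℝ := fun f => sSup (S f) with hp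
  have idf : ∀ a : ℝ, a = max a 0 - max (-a) 0 := by
    intro a
    rcases le_total a 0 with h | h
    · rw [max_eq_right h, max_eq_left (neg_nonneg.2 h)]; ring
    · rw [max_eq_left h, max_eq_right (neg_nonpos.2 h)]; ring
  have hmem0 : ∀ f : G → ℝ, (∀ x, 0 ≤ f x) → (0:ℝ) ∈ S f := fun f h =>
    ⟨fun _ => 0, isUb_const 0, fun x => ⟨le_rfl, h x⟩, (meas_zero hρ).symm⟩
  have hne : ∀ f : G → ℝ, (∀ x, 0 ≤ f x) → (S f).Nonempty :=
    fun f h => ⟨0, hmem0 f h⟩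
  have hub : ∀ (f : G → ℝ) (B : ℝ), 0 ≤ B → (∀ x, f x ≤ B) →
      ∀ r ∈ S f, r ≤ C * B := by
    rintro f B hB hfB r ⟨g, hg, hgb, rfl⟩
    have habs : |ρ g| ≤ C * B := by
      refine hCb g hg B hB (fun x => ?_)
      rw [abs_le]
      exact ⟨by linarith [(hgb x).1, hB], by linarith [(hgb x).2, hfB x]⟩
    linarith [le_abs_self (ρ g), habs]
  have hbddUb : ∀ f : G → ℝ, IsUb f → BddAbove (S f) := by
    intro f hf
    obtain ⟨B₀, hB₀⟩ := hf.2
    exact ⟨C * max B₀ 0, fun r hr => hub f (max B₀ 0) (le_max_right _ _)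
      (fun x => le_trans (le_abs_self _) (le_trans (hB₀ x) (le_max_left _ _))) r hr⟩
  have hple : ∀ (f : G → ℝ) (B : ℝ), 0 ≤ B → (∀ x, 0 ≤ f x ∧ f x ≤ B) →
      p f ≤ C * B := fun f B hB h =>
    csSup_le (hne f (fun x => (h x).1)) (hub f B hB (fun x => (h x).2))
  have hpge : ∀ f : G → ℝ, IsUb f → (∀ x, 0 ≤ f x) → ρ f ≤ p f := fun f hf h =>
    le_csSup (hbddUb f hf) ⟨f, hf, fun x => ⟨h x, le_rfl⟩, rfl⟩
  have hp0 : ∀ f : G → ℝ, IsUb f → (∀ x, 0 ≤ f x) → 0 ≤ p f := fun f hf h =>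
    le_csSup (hbddUb f hf) (hmem0 f h)
  have hp00 : p (fun _ : G => (0:ℝ)) = 0 :=
    le_antisymm (by simpa using hple (fun _ => 0) 0 le_rfl (fun x => ⟨le_rfl, le_rfl⟩))
      (hp0 _ (isUb_const 0) (fun _ => le_rfl))
  have hpadd : ∀ f₁ f₂ : G → ℝ, IsUb f₁ → IsUb f₂ → (∀ x, 0 ≤ f₁ x) → (∀ x, 0 ≤ f₂ x) →
      p (fun x => f₁ x + f₂ x) = p f₁ + p f₂ := by
    intro f₁ f₂ h₁ h₂ hp₁ hp₂
    apply le_antisymm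
    · apply csSup_le (hne _ (fun x => add_nonneg (hp₁ x) (hp₂ x)))
      rintro r ⟨g, hg, hgb, rfl⟩
      set g₁ : G → ℝ := fun x => min (g x) (f₁ x) with hg₁def
      set g₂ : G → ℝ := fun x => g x - g₁ x with hg₂def
      have hg₁Ub : IsUb g₁ := hg.min h₁
      have hg₂Ub : IsUb g₂ := hg.sub hg₁Ub
      have hsplit : ρ g = ρ g₁ + ρ g₂ := by
        rw [← meas_add' hρ hg₁Ub hg₂Ub]
        congr 1
        funext x
        simp only [hg₂def]
        ring
      have m₁ : ρ g₁ ≤ p f₁ := by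
        refine le_csSup (hbddUb f₁ h₁) ⟨g₁, hg₁Ub, fun x => ?_, rfl⟩
        exact ⟨le_min (hgb x).1 (hp₁ x), min_le_right _ _⟩
      have m₂ : ρ g₂ ≤ p f₂ := by
        refine le_csSup (hbddUb f₂ h₂) ⟨g₂, hg₂Ub, fun x => ?_, rfl⟩
        constructor
        · simp only [hg₂def, hg₁def]
          have := min_le_left (g x) (f₁ x)
          linarith
        · simp only [hg₂def, hg₁def]
          have h6 : g x ≤ f₁ x + f₂ x := (hgb x).2
          rcases le_total (g x) (f₁ x) with hx | hx
          · rw [min_eq_left hx]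
            have := (hp₂ x)
            linarith
          · rw [min_eq_right hx]
            linarith
      linarith
    · have key : ∀ r₁ ∈ S f₁, ∀ r₂ ∈ S f₂, r₁ + r₂ ≤ p (fun x => f₁ x + f₂ x) := by
        rintro r₁ ⟨g₁, hg₁, hb₁, rfl⟩ r₂ ⟨g₂, hg₂, hb₂, rfl⟩
        have e : ρ g₁ + ρ g₂ = ρ (fun x => g₁ x + g₂ x) := (meas_add' hρ hg₁ hg₂).symm
        rw [e]
        exact le_csSup (hbddUb _ (h₁.add h₂)) ⟨_, hg₁.add hg₂, fun x =>
          ⟨add_nonneg (hb₁ x).1 (hb₂ x).1, add_le_add (hb₁ x).2 (hb₂ x).2⟩, rfl⟩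
      have h2 : ∀ r₁ ∈ S f₁, r₁ ≤ p (fun x => f₁ x + f₂ x) - p f₂ := by
        intro r₁ hr₁
        have h3 : p f₂ ≤ p (fun x => f₁ x + f₂ x) - r₁ :=
          csSup_le (hne f₂ hp₂) (fun r₂ hr₂ => by linarith [key r₁ hr₁ r₂ hr₂])
        linarith
      have := csSup_le (hne f₁ hp₁) h2
      linarith
  have hpsmul : ∀ (c : ℝ), 0 < c → ∀ f : G → ℝ, IsUb f → (∀ x, 0 ≤ f x) →
      p (fun x => c * f x) = c * p f := by
    intro c hc f hf hfp
    apply le_antisymm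
    · apply csSup_le (hne _ (fun x => mul_nonneg hc.le (hfp x)))
      rintro r ⟨g, hg, hgb, rfl⟩
      have hg' : IsUb (fun x => c⁻¹ * g x) := hg.smul c⁻¹
      have e : ρ g = c * ρ (fun x => c⁻¹ * g x) := by
        rw [meas_smul' hρ hg c⁻¹]
        field_simp
      rw [e]
      have hmem : ρ (fun x => c⁻¹ * g x) ≤ p f := by
        refine le_csSup (hbddUb f hf) ⟨_, hg', fun x => ?_, rfl⟩
        constructor
        · exact mul_nonneg (inv_nonneg.2 hc.le) (hgb x).1
        · rw [inv_mul_le_iff₀ hc]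
          exact (hgb x).2
      exact mul_le_mul_of_nonneg_left hmem hc.le
    · have h2 : ∀ r ∈ S f, c * r ≤ p (fun x => c * f x) := by
        rintro r ⟨g, hg, hgb, rfl⟩
        have e : c * ρ g = ρ (fun x => c * g x) := (meas_smul' hρ hg c).symm
        rw [e]
        exact le_csSup (hbddUb _ (hf.smul c)) ⟨_, hg.smul c, fun x =>
          ⟨mul_nonneg hc.le (hgb x).1, mul_le_mul_of_nonneg_left (hgb x).2 hc.le⟩, rfl⟩
      have h3 : p f ≤ c⁻¹ * p (fun x => c * f x) := by
        refine csSup_le (hne f hfp) (fun r hr => ?_)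
        have h4 := h2 r hr
        have h5 := mul_le_mul_of_nonneg_left h4 (inv_nonneg.2 hc.le)
        rwa [← mul_assoc, inv_mul_cancel₀ hc.ne', one_mul] at h5
      calc c * p f ≤ c * (c⁻¹ * p (fun x => c * f x)) :=
            mul_le_mul_of_nonneg_left h3 hc.le
        _ = p (fun x => c * f x) := by field_simp
  have hpinv : ∀ (a : G) (f : G → ℝ), IsUb f → p (fun x => f (a * x)) = p f := by
    intro a f hf
    have hSeq : S (fun x => f (a * x)) = S f := by
      ext r
      constructor
      · rintro ⟨g, hg, hgb, rfl⟩
        refine ⟨fun x => g (a⁻¹ * x), hg.transLeft hU hconj a⁻¹, fun x => ?_,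
          (hρInv a⁻¹ g hg).symm⟩
        refine ⟨(hgb _).1, ?_⟩
        have h7 : g (a⁻¹ * x) ≤ f (a * (a⁻¹ * x)) := (hgb (a⁻¹ * x)).2
        rwa [mul_inv_cancel_left] at h7
      · rintro ⟨g, hg, hgb, rfl⟩
        exact ⟨fun x => g (a * x), hg.transLeft hU hconj a,
          fun x => ⟨(hgb _).1, (hgb (a * x)).2⟩, (hρInv a g hg).symm⟩
    simp only [hp]
    rw [hSeq]
  -- the positive part ρ⁺
  set fp : (G → ℝ) → G → ℝ := fun f x => max (f x) 0 with hfp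
  set fm : (G → ℝ) → G → ℝ := fun f x => max (-f x) 0 with hfm
  have hfpUb : ∀ f : G → ℝ, IsUb f → IsUb (fp f) := fun f hf => hf.max (isUb_const 0)
  have hfmUb : ∀ f : G → ℝ, IsUb f → IsUb (fm f) := fun f hf => hf.neg.max (isUb_const 0)
  have hfpnn : ∀ (f : G → ℝ) (x : G), 0 ≤ fp f x := fun f x => le_max_right _ _
  have hfmnn : ∀ (f : G → ℝ) (x : G), 0 ≤ fm f x := fun f x => le_max_right _ _
  set rp : (G → ℝ) → ℝ := fun f => p (fp f) - p (fm f) with hrp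
  have hdec : ∀ f g h : G → ℝ, IsUb f → IsUb g → IsUb h → (∀ x, 0 ≤ g x) →
      (∀ x, 0 ≤ h x) → (∀ x, f x = g x - h x) → rp f = p g - p h := by
    intro f g h hfU hgU hhU hg0 hh0 hfe
    have e : (fun x => g x + fm f x) = (fun x => h x + fp f x) := by
      funext x
      simp only [hfm, hfp]
      have := idf (f x)
      have := hfe x
      linarith [idf (f x), hfe x]
    have he1 : p (fun x => g x + fm f x) = p g + p (fm f) :=
      hpadd g (fm f) hgU (hfmUb f hfU) hg0 (hfmnn f)
    have he2 : p (fun x => h x + fp f x) = p h + p (fp f) :=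
      hpadd h (fp f) hhU (hfpUb f hfU) hh0 (hfpnn f)
    have hcongr := congrArg p e
    rw [he1, he2] at hcongr
    simp only [hrp]
    linarith
  have hrpadd : ∀ f g : G → ℝ, IsUb f → IsUb g →
      rp (fun x => f x + g x) = rp f + rp g := by
    intro f g hf hg
    have hstep := hdec (fun x => f x + g x) (fun x => fp f x + fp g x)
      (fun x => fm f x + fm g x) (hf.add hg)
      ((hfpUb f hf).add (hfpUb g hg)) ((hfmUb f hf).add (hfmUb g hg))
      (fun x => add_nonneg (hfpnn f x) (hfpnn g x))
      (fun x => add_nonneg (hfmnn f x) (hfmnn g x))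
      (fun x => by simp only [hfp, hfm]; linarith [idf (f x), idf (g x)])
    rw [hstep, hpadd _ _ (hfpUb f hf) (hfpUb g hg) (hfpnn f) (hfpnn g),
      hpadd _ _ (hfmUb f hf) (hfmUb g hg) (hfmnn f) (hfmnn g)]
    simp only [hrp]
    ring
  have hrpsmul : ∀ (c : ℝ) (f : G → ℝ), IsUb f →
      rp (fun x => c * f x) = c * rp f := by
    intro c f hf
    rcases lt_trichotomy c 0 with hc | hc | hc
    · have hmc : 0 < -c := by linarith
      have hstep := hdec (fun x => c * f x) (fun x => -c * fm f x)
        (fun x => -c * fp f x) (hf.smul c) ((hfmUb f hf).smul (-c))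
        ((hfpUb f hf).smul (-c))
        (fun x => mul_nonneg hmc.le (hfmnn f x))
        (fun x => mul_nonneg hmc.le (hfpnn f x))
        (fun x => by simp only [hfp, hfm]; linear_combination c * (idf (f x)))
      rw [hstep, hpsmul (-c) hmc _ (hfmUb f hf) (hfmnn f),
        hpsmul (-c) hmc _ (hfpUb f hf) (hfpnn f)]
      simp only [hrp]
      ring
    · subst hc
      have e : (fun x => (0:ℝ) * f x) = (fun _ : G => (0:ℝ)) := by
        funext x; ring
      rw [e]
      have e1 : fp (fun _ : G => (0:ℝ)) = fun _ : G => (0:ℝ) := by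
        funext x; simp [hfp]
      have e2 : fm (fun _ : G => (0:ℝ)) = fun _ : G => (0:ℝ) := by
        funext x; simp [hfm]
      simp only [hrp]
      rw [e1, e2, hp00]
      ring
    · have hstep := hdec (fun x => c * f x) (fun x => c * fp f x)
        (fun x => c * fm f x) (hf.smul c) ((hfpUb f hf).smul c)
        ((hfmUb f hf).smul c)
        (fun x => mul_nonneg hc.le (hfpnn f x))
        (fun x => mul_nonneg hc.le (hfmnn f x))
        (fun x => by simp only [hfp, hfm]; linear_combination c * (idf (f x)))
      rw [hstep, hpsmul c hc _ (hfpUb f hf) (hfpnn f),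
        hpsmul c hc _ (hfmUb f hf) (hfmnn f)]
      simp only [hrp]
      ring
  have hrppos : ∀ f : G → ℝ, IsUb f → (∀ x, 0 ≤ f x) → rp f = p f := by
    intro f hf h
    have e1 : fp f = f := funext fun x => max_eq_left (h x)
    have e2 : fm f = fun _ : G => (0:ℝ) :=
      funext fun x => max_eq_right (neg_nonpos.2 (h x))
    simp only [hrp]
    rw [e1, e2, hp00]
    ring
  have hrpMeas : IsMeas rp := by
    refine ⟨fun f g hf hg => hrpadd f g hf hg, fun c f hf => hrpsmul c f hf, ?_⟩
    refine ⟨2 * C, fun f hf hfb => ?_⟩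
    have h1 : p (fp f) ≤ C * 1 := by
      refine hple (fp f) 1 zero_le_one (fun x => ⟨hfpnn f x, ?_⟩)
      simp only [hfp]
      exact max_le (le_trans (le_abs_self _) (hfb x)) zero_le_one
    have h2 : p (fm f) ≤ C * 1 := by
      refine hple (fm f) 1 zero_le_one (fun x => ⟨hfmnn f x, ?_⟩)
      simp only [hfm]
      exact max_le (le_trans (neg_le_abs _) (hfb x)) zero_le_one
    have h1' : 0 ≤ p (fp f) := hp0 _ (hfpUb f hf) (hfpnn f)
    have h2' : 0 ≤ p (fm f) := hp0 _ (hfmUb f hf) (hfmnn f)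
    simp only [hrp]
    rw [abs_le]
    constructor <;> linarith
  have hrpPos : IsPositive rp := fun f hf h => by
    rw [hrppos f hf h]; exact hp0 f hf h
  have hrpInv : ∀ (a : G) (f : G → ℝ), IsUb f → rp (fun y => f (a * y)) = rp f := by
    intro a f hf
    have e1 : fp (fun y => f (a * y)) = fun y => fp f (a * y) := rfl
    have e2 : fm (fun y => f (a * y)) = fun y => fm f (a * y) := rfl
    simp only [hrp]
    rw [e1, e2, hpinv a (fp f) (hfpUb f hf), hpinv a (fm f) (hfmUb f hf)]
  -- the negative part
  set rm : (G → ℝ) → ℝ := fun f => rp f - ρ f with hrm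
  have hrmMeas : IsMeas rm := by
    refine ⟨?_, ?_, ?_⟩
    · intro f g hf hg
      simp only [hrm]
      rw [hρ.1 f g hf hg]
      have := hrpadd f g hf hg
      have e : rp (f + g) = rp (fun x => f x + g x) := rfl
      rw [e, this]
      ring
    · intro c f hf
      simp only [hrm]
      rw [hρ.2.1 c f hf]
      have := hrpsmul c f hf
      have e : rp (c • f) = rp (fun x => c * f x) := rfl
      rw [e, this]
      ring
    · obtain ⟨C₁, hC₁⟩ := hrpMeas.2.2
      obtain ⟨C₂, hC₂⟩ := hρ.2.2
      refine ⟨C₁ + C₂, fun f hf hfb => ?_⟩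
      simp only [hrm]
      have := abs_sub (rp f) (ρ f)
      calc |rp f - ρ f| ≤ |rp f| + |ρ f| := abs_sub _ _
        _ ≤ C₁ + C₂ := add_le_add (hC₁ f hf hfb) (hC₂ f hf hfb)
  have hrmPos : IsPositive rm := by
    intro f hf h
    simp only [hrm]
    rw [hrppos f hf h]
    linarith [hpge f hf h]
  have hrmInv : ∀ (a : G) (f : G → ℝ), IsUb f → rm (fun y => f (a * y)) = rm f := by
    intro a f hf
    simp only [hrm]
    rw [hrpInv a f hf, hρInv a f hf]
  -- conclude
  intro f hf
  have h1 := scaled_mean huniq hm hrpMeas hrpPos hrpInv f hf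
  have h2 := scaled_mean huniq hm hrmMeas hrmPos hrmInv f hf
  simp only [hrm] at h2
  linear_combination h1 - h2

end Riesz

section MeanCor

variable {G : Type*} [Group G] [UniformSpace G] {N : Filter G}

/-- the unique invariant mean is also right invariant -/
theorem right_invariant_mean
    (hU : 𝓤 G = comap (fun p : G × G => p.2 / p.1) N)
    (huniq : ∀ m m' : (G → ℝ) → ℝ, MeanProp m → MeanProp m' →
      ∀ f : G → ℝ, IsUb f → m f = m' f)
    {m : (G → ℝ) → ℝ} (hm : MeanProp m) :
    ∀ (a : G) (f : G → ℝ), IsUb f → m (fun x => f (x * a)) = m f := by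
  intro a f hf
  set ma : (G → ℝ) → ℝ := fun g => m (fun x => g (x * a)) with hma
  have hmaProp : MeanProp ma := by
    obtain ⟨hmM, hmP, hm1, hmI⟩ := hm
    refine ⟨⟨?_, ?_, ?_⟩, ?_, ?_, ?_⟩
    · intro f₁ f₂ h₁ h₂
      simp only [hma]
      exact meas_add' hmM (h₁.transRight hU a) (h₂.transRight hU a)
    · intro c f₁ h₁
      simp only [hma]
      exact meas_smul' hmM (h₁.transRight hU a) c
    · obtain ⟨C, hC⟩ := hmM.2.2
      exact ⟨C, fun f₁ h₁ hb => hC _ (h₁.transRight hU a) (fun x => hb _)⟩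
    · intro f₁ h₁ hpos
      exact hmP _ (h₁.transRight hU a) (fun x => hpos _)
    · simp only [hma]
      exact hm1
    · intro b f₁ h₁
      simp only [hma]
      have e : (fun x => f₁ (b * (x * a))) = (fun x => (fun z => f₁ (z * a)) (b * x)) := by
        funext x
        simp [mul_assoc]
      calc m (fun x => f₁ (b * (x * a)))
          = m (fun x => (fun z => f₁ (z * a)) (b * x)) := by rw [e]
        _ = m (fun z => f₁ (z * a)) := hmI b _ (h₁.transRight hU a)
  exact huniq ma m hmaProp hm f hf

/-- representation of convolution by the unique mean -/
theorem conv_rep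
    (hU : 𝓤 G = comap (fun p : G × G => p.2 / p.1) N)
    (hconj : ∀ (a : G) (V : Set G), V ∈ N → ∃ V' ∈ N, ∀ v ∈ V', a * v * a⁻¹ ∈ V)
    (huniq : ∀ m m' : (G → ℝ) → ℝ, MeanProp m → MeanProp m' →
      ∀ f : G → ℝ, IsUb f → m f = m' f)
    {m : (G → ℝ) → ℝ} (hm : MeanProp m)
    {ν : (G → ℝ) → ℝ} (hν : IsMeas ν) :
    ∀ f : G → ℝ, IsUb f →
      m (fun x => ν (fun y => f (x * y))) = ν (fun _ => 1) * m f := by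
  have hmM := hm.1
  set ρ : (G → ℝ) → ℝ := fun g => m (fun x => ν (fun y => g (x * y))) with hρdef
  obtain ⟨Cν, hCν0, hCνb⟩ := meas_bound hν
  obtain ⟨Cm, hCm0, hCmb⟩ := meas_bound hmM
  have hρMeas : IsMeas ρ := by
    refine ⟨?_, ?_, ?_⟩
    · intro f g hf hg
      simp only [hρdef]
      have e : (fun x => ν (fun y => (f + g) (x * y)))
          = fun x => ν (fun y => f (x * y)) + ν (fun y => g (x * y)) := by
        funext x
        exact meas_add' hν (hf.transLeft hU hconj x) (hg.transLeft hU hconj x)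
      rw [e]
      exact meas_add' hmM (outer_isUb hU hconj hν hf) (outer_isUb hU hconj hν hg)
    · intro c f hf
      simp only [hρdef]
      have e : (fun x => ν (fun y => (c • f) (x * y)))
          = fun x => c * ν (fun y => f (x * y)) := by
        funext x
        exact meas_smul' hν (hf.transLeft hU hconj x) c
      rw [e]
      exact meas_smul' hmM (outer_isUb hU hconj hν hf) c
    · refine ⟨Cm * Cν, fun f hf hb => ?_⟩
      have houter : ∀ x, |ν (fun y => f (x * y))| ≤ Cν := by
        intro x
        have := hCνb (fun y => f (x * y)) (hf.transLeft hU hconj x) 1 zero_le_one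
          (fun y => hb (x * y))
        simpa using this
      have := hCmb _ (outer_isUb hU hconj hν hf) Cν hCν0 houter
      simpa using this
  have hρInv : ∀ (a : G) (f : G → ℝ), IsUb f → ρ (fun y => f (a * y)) = ρ f := by
    intro a f hf
    simp only [hρdef]
    have e : (fun x => ν (fun y => f (a * (x * y))))
        = fun x => (fun z => ν (fun y => f (z * y))) (a * x) := by
      funext x
      congr 1
      funext y
      rw [mul_assoc]
    rw [e]
    exact hm.2.2.2 a _ (outer_isUb hU hconj hν hf)
  intro f hf
  have hrep := invariant_rep hU hconj huniq hm hρMeas hρInv f hf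
  have e1 : ρ (fun _ => 1) = ν (fun _ => 1) * m (fun _ => 1) := by
    simp only [hρdef]
    have e : (fun x : G => ν (fun y : G => (1:ℝ))) = fun _ : G => ν (fun _ : G => (1:ℝ)) := rfl
    rw [e, meas_const hmM]
  have hfinal : ρ f = ν (fun _ => 1) * m f := by
    rw [hrep, e1, hm.2.2.1]
    ring
  exact hfinal

end MeanCor

section Bump

open scoped Uniformity
open scoped SetRel

/-- In any uniform space, given an entourage `U` and a point `x₀`, there is a bounded
uniformly continuous bump function equal to `1` at `x₀` and vanishing outside of `U[x₀]`. -/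
theorem exists_unif_bump {X : Type*} [UniformSpace X] (x₀ : X) {U : Set (X × X)}
    (hU : U ∈ 𝓤 X) :
    ∃ u : X → ℝ, UniformContinuous u ∧ (∀ x, 0 ≤ u x) ∧ (∀ x, u x ≤ 1) ∧
      u x₀ = 1 ∧ ∀ x, (x₀, x) ∉ U → u x = 0 := by
  classical
  -- a decreasing chain of symmetric entourages
  have key : ∀ V : {V : Set (X × X) // V ∈ 𝓤 X ∧ SetRel.IsSymm V},
      ∃ V' : {V : Set (X × X) // V ∈ 𝓤 X ∧ SetRel.IsSymm V},
        V'.1 ○ V'.1 ⊆ V.1 ∧ V'.1 ⊆ V.1 := by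
    rintro ⟨V, hV, hVsymm⟩
    obtain ⟨t, ht, htsymm, htV⟩ := comp_symm_mem_uniformity_sets hV
    refine ⟨⟨t ∩ V, Filter.inter_mem ht hV, by haveI := htsymm; haveI := hVsymm; exact inferInstance⟩, ?_, Set.inter_subset_right⟩
    exact Set.Subset.trans (SetRel.comp_subset_comp Set.inter_subset_left Set.inter_subset_left) htV
  obtain ⟨V₀, hV₀m, hV₀symm, hV₀U⟩ := comp_symm_mem_uniformity_sets hU
  have hV₀U' : V₀ ⊆ U := by
    intro p hp
    exact hV₀U ⟨p.2, hp, refl_mem_uniformity hV₀m⟩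
  set next : {V : Set (X × X) // V ∈ 𝓤 X ∧ SetRel.IsSymm V} →
      {V : Set (X × X) // V ∈ 𝓤 X ∧ SetRel.IsSymm V} := fun V => (key V).choose with hnext
  set seq : ℕ → {V : Set (X × X) // V ∈ 𝓤 X ∧ SetRel.IsSymm V} :=
    fun n => next^[n] ⟨V₀, hV₀m, hV₀symm⟩ with hseq
  have hseq0 : (seq 0).1 = V₀ := rfl
  have hstep : ∀ n, (seq (n + 1)).1 ○ (seq (n + 1)).1 ⊆ (seq n).1 ∧
      (seq (n + 1)).1 ⊆ (seq n).1 := by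
    intro n
    have e : seq (n + 1) = next (seq n) := by
      simp only [hseq, Function.iterate_succ_apply']
    rw [e, hnext]
    exact (key (seq n)).choose_spec
  have hmono : ∀ k n : ℕ, k ≤ n → (seq n).1 ⊆ (seq k).1 := by
    intro k n hkn
    induction n with
    | zero => simp_all
    | succ j ih =>
        rcases Nat.lt_or_ge k (j+1) with h | h
        · exact Set.Subset.trans (hstep j).2 (ih (Nat.lt_succ_iff.1 h))
        · have : k = j + 1 := le_antisymm hkn h
          subst this
          exact Set.Subset.rfl
  set F : Filter (X × X) := ⨅ n : ℕ, Filter.principal (seq n).1 with hF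
  have hdir : Directed (· ≥ ·) (fun n : ℕ => (seq n).1) := by
    intro a b
    exact ⟨max a b, hmono a (max a b) (le_max_left _ _),
      hmono b (max a b) (le_max_right _ _)⟩
  have hbasis : F.HasBasis (fun _ : ℕ => True) (fun n => (seq n).1) :=
    Filter.hasBasis_iInf_principal hdir
  have hmemF : ∀ n, (seq n).1 ∈ F := fun n => hbasis.mem_of_mem trivial
  have hle : 𝓤 X ≤ F := le_iInf (fun n => Filter.le_principal_iff.2 (seq n).2.1)
  -- build a uniform space core from the chain
  set core : UniformSpace.Core X := UniformSpace.Core.mk' F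
    (fun r hr x => by
      obtain ⟨n, -, hn⟩ := hbasis.mem_iff.1 hr
      exact hn (refl_mem_uniformity (seq n).2.1))
    (fun r hr => by
      obtain ⟨n, -, hn⟩ := hbasis.mem_iff.1 hr
      refine Filter.mem_of_superset (hmemF n) ?_
      intro p hp
      haveI := (seq n).2.2
      exact hn (SetRel.symm _ hp))
    (fun r hr => by
      obtain ⟨n, -, hn⟩ := hbasis.mem_iff.1 hr
      exact ⟨(seq (n+1)).1, hmemF (n+1), Set.Subset.trans (hstep n).1 hn⟩) with hcore
  have hcoreU : core.uniformity = F := rfl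
  have hu'U : 𝓤[UniformSpace.ofCore core] = F := rfl
  have hcg : @Filter.IsCountablyGenerated _ (𝓤[UniformSpace.ofCore core]) := by
    rw [hu'U]
    exact hbasis.isCountablyGenerated
  obtain ⟨I, hI⟩ := @UniformSpace.metrizable_uniformity X (UniformSpace.ofCore core) hcg
  -- the pseudometric
  have hIU : 𝓤[I.toUniformSpace] = F := by rw [hI]; exact hu'U
  have hV₀mem : (seq 0).1 ∈ 𝓤[I.toUniformSpace] := by rw [hIU]; exact hmemF 0
  obtain ⟨ε, hε, hεball⟩ := (@Metric.mem_uniformity_dist X I _).1 hV₀mem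
  set d : X → ℝ := fun x => @dist X I.toDist x₀ x with hd
  have hduc : UniformContinuous d := by
    rw [ucReal_iff]
    intro δ hδ
    have hmem : {p : X × X | @dist X I.toDist p.1 p.2 < δ} ∈ F := by
      rw [← hIU]
      exact @Metric.dist_mem_uniformity X I δ hδ
    refine ⟨_, hle hmem, fun p hp => ?_⟩
    have h0 := @abs_dist_sub_le X I p.1 p.2 x₀
    rw [@dist_comm X I p.1 x₀, @dist_comm X I p.2 x₀] at h0
    exact lt_of_le_of_lt h0 hp
  set u : X → ℝ := fun x => max (1 - d x / ε) 0 with hudef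
  refine ⟨u, ?_, fun x => le_max_right _ _, fun x => ?_, ?_, ?_⟩
  · rw [ucReal_iff]
    intro δ hδ
    obtain ⟨W, hW, hWp⟩ := ucReal_iff.1 hduc (δ * ε) (by positivity)
    refine ⟨W, hW, fun p hp => ?_⟩
    have h1 := hWp p hp
    have h2 : |u p.1 - u p.2| ≤ |d p.1 / ε - d p.2 / ε| := by
      simp only [hudef]
      have := abs_max_sub_max_le_max (1 - d p.1 / ε) 0 (1 - d p.2 / ε) 0
      simp only [sub_zero, abs_zero] at this
      refine le_trans this ?_
      have e : |1 - d p.1 / ε - (1 - d p.2 / ε)| = |d p.1 / ε - d p.2 / ε| := by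
        rw [show (1 - d p.1 / ε - (1 - d p.2 / ε)) = -(d p.1 / ε - d p.2 / ε) by ring,
          abs_neg]
      rw [e]
      simp
    have h3 : |d p.1 / ε - d p.2 / ε| = |d p.1 - d p.2| / ε := by
      rw [div_sub_div_same, abs_div, abs_of_pos hε]
    have h4 : |d p.1 - d p.2| / ε < δ := by
      rw [div_lt_iff₀ hε]
      linarith [h1]
    calc |u p.1 - u p.2| ≤ |d p.1 - d p.2| / ε := by rw [← h3]; exact h2
      _ < δ := h4
  · simp only [hudef]
    have : 0 ≤ d x := @dist_nonneg X I x₀ x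
    have : d x / ε ≥ 0 := by positivity
    apply max_le <;> linarith [zero_le_one (α := ℝ)]
  · simp only [hudef, hd]
    rw [@dist_self X I x₀]
    norm_num
  · intro x hx
    simp only [hudef]
    rw [max_eq_right]
    have hd' : ¬ d x < ε := by
      intro hlt
      exact hx (hV₀U' (by
        rw [← hseq0]
        exact hεball hlt))
    push_neg at hd'
    have : (1:ℝ) ≤ d x / ε := (one_le_div hε).2 hd'
    linarith

end Bump

section SupHelpers

theorem abs_sup'_sub_sup'_le {ι : Type*} (s : Finset ι) (hs : s.Nonempty)
    (v w : ι → ℝ) (ε : ℝ) (h : ∀ i ∈ s, |v i - w i| ≤ ε) :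
    |s.sup' hs v - s.sup' hs w| ≤ ε := by
  rw [abs_sub_le_iff]
  constructor
  · rw [sub_le_iff_le_add]
    apply Finset.sup'_le
    intro i hi
    have h1 := abs_le.1 (h i hi)
    have h2 := Finset.le_sup' w hi
    linarith [h1.2]
  · rw [sub_le_iff_le_add]
    apply Finset.sup'_le
    intro i hi
    have h1 := abs_le.1 (h i hi)
    have h2 := Finset.le_sup' v hi
    linarith [h1.1]

theorem isUb_sup' {X : Type*} [UniformSpace X] {ι : Type*} (s : Finset ι)
    (hs : s.Nonempty) (v : ι → X → ℝ) (hv : ∀ i ∈ s, IsUb (v i)) :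
    IsUb (fun x => s.sup' hs (fun i => v i x)) := by
  induction hs using Finset.Nonempty.cons_induction with
  | singleton a =>
      have e : (fun x => Finset.sup' {a} (Finset.singleton_nonempty a) (fun i => v i x))
          = v a := by
        funext x
        exact Finset.sup'_singleton ..
      rw [e]
      exact hv a (Finset.mem_singleton_self a)
  | cons a t hat hts ih =>
      have e : (fun x => (Finset.cons a t hat).sup' (Finset.cons_nonempty hat)
          (fun i => v i x)) = fun x => max (v a x) (t.sup' hts (fun i => v i x)) := by
        funext x
        exact Finset.sup'_cons ..
      rw [e]
      exact (hv a (Finset.mem_cons_self a t)).max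
        (ih (fun i hi => hv i (Finset.mem_cons_of_mem hi)))

end SupHelpers

theorem stmt17 {G : Type*} [Group G] [TopologicalSpace G] [IsTopologicalGroup G] :
    letI : UniformSpace G := IsTopologicalGroup.rightUniformSpace G
    -- (a) `G` is uniquely amenable: there is exactly one left-invariant mean on `Ub(rG)`
    ((∃ m : (G → ℝ) → ℝ, IsMeas m ∧ IsPositive m ∧ m (fun _ => 1) = 1 ∧
        ∀ (x : G) (f : G → ℝ), IsUb f → m (fun y => f (x * y)) = m f) ∧
      (∀ m m' : (G → ℝ) → ℝ,
        (IsMeas m ∧ IsPositive m ∧ m (fun _ => 1) = 1 ∧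
          ∀ (x : G) (f : G → ℝ), IsUb f → m (fun y => f (x * y)) = m f) →
        (IsMeas m' ∧ IsPositive m' ∧ m' (fun _ => 1) = 1 ∧
          ∀ (x : G) (f : G → ℝ), IsUb f → m' (fun y => f (x * y)) = m' f) →
        ∀ f : G → ℝ, IsUb f → m f = m' f)) →
    -- (b) every element of the topological centre of `Meas(rG)` is a uniform measure
    (∀ ξ : (G → ℝ) → ℝ, IsMeas ξ →
      @Continuous {ν : (G → ℝ) → ℝ // IsMeas ν} ({f : G → ℝ // IsUb f} → ℝ)
        (weakStarMeas G) _
        (fun ν => fun f => conv ξ ν.1 f.1) →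
      IsUniformMeasure ξ) →
    -- then `G` is precompact
    TotallyBounded (Set.univ : Set G) := by
  letI : UniformSpace G := IsTopologicalGroup.rightUniformSpace G
  intro ha hb
  classical
  have hU : 𝓤 G = comap (fun p : G × G => p.2 / p.1) (𝓝 (1 : G)) := by
    simp only [div_eq_mul_inv]; rfl
  have hconj : ∀ (a : G) (V : Set G), V ∈ 𝓝 (1 : G) →
      ∃ V' ∈ 𝓝 (1 : G), ∀ v ∈ V', a * v * a⁻¹ ∈ V := by
    intro a V hV
    have h1 : Continuous (fun v : G => a * v * a⁻¹) :=
      (continuous_const.mul continuous_id).mul continuous_const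
    have h2 : Tendsto (fun v : G => a * v * a⁻¹) (𝓝 1) (𝓝 1) := by
      have := h1.tendsto 1
      simpa using this
    exact ⟨_, h2 hV, fun v hv => hv⟩
  obtain ⟨⟨m, hmMeas, hmPos, hm1, hmInv⟩, huniq0⟩ := ha
  have hm : MeanProp m := ⟨hmMeas, hmPos, hm1, hmInv⟩
  have huniq : ∀ m₁ m₂ : (G → ℝ) → ℝ, MeanProp m₁ → MeanProp m₂ →
      ∀ f : G → ℝ, IsUb f → m₁ f = m₂ f :=
    fun m₁ m₂ h₁ h₂ => huniq0 m₁ m₂ h₁ h₂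
  -- `m` lies in the topological centre, so it is a uniform measure
  have hcont : @Continuous {ν : (G → ℝ) → ℝ // IsMeas ν} ({f : G → ℝ // IsUb f} → ℝ)
      (weakStarMeas G) _ (fun ν => fun f => conv m ν.1 f.1) := by
    have he : (fun ν : {ν : (G → ℝ) → ℝ // IsMeas ν} =>
        fun f : {f : G → ℝ // IsUb f} => conv m ν.1 f.1)
        = fun ν => fun f => ν.1 (fun _ => 1) * m f.1 := by
      funext ν f
      exact conv_rep hU hconj huniq hm ν.2 f.1 f.2
    rw [he]
    have h1 : @Continuous _ _ (weakStarMeas G) Pi.topologicalSpace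
        (fun ν : {ν : (G → ℝ) → ℝ // IsMeas ν} =>
          (fun f : {f : G → ℝ // IsUb f} => ν.1 f.1)) := continuous_induced_dom
    have h2 : Continuous (fun h : ({f : G → ℝ // IsUb f} → ℝ) =>
        fun f : {f : G → ℝ // IsUb f} => h ⟨fun _ => 1, isUb_const 1⟩ * m f.1) := by
      apply continuous_pi
      intro f
      exact (continuous_apply _).mul continuous_const
    exact @Continuous.comp {ν : (G → ℝ) → ℝ // IsMeas ν} ({f : G → ℝ // IsUb f} → ℝ)
      ({f : G → ℝ // IsUb f} → ℝ) (weakStarMeas G) _ _ _ _ h2 h1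
  have hUM : IsUniformMeasure m := hb m hmMeas hcont
  -- suppose G is not precompact
  by_contra hTB
  have hex : ∃ d ∈ 𝓤 G, ∀ t : Set G, t.Finite →
      ¬ (Set.univ ⊆ ⋃ y ∈ t, {x : G | (x, y) ∈ d}) := by
    by_contra hc
    push_neg at hc
    apply hTB
    intro d hd
    obtain ⟨t, ht, hcov⟩ := hc d hd
    exact ⟨t, ht, hcov⟩
  obtain ⟨d, hd, hno⟩ := hex
  rw [hU, Filter.mem_comap] at hd
  obtain ⟨V₀, hV₀N, hV₀sub⟩ := hd
  have avoid : ∀ t : Finset G, ∃ z : G, ∀ y ∈ t, y / z ∉ V₀ := by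
    intro t
    have h1 := hno ↑t t.finite_toSet
    rw [Set.not_subset] at h1
    obtain ⟨z, -, hz⟩ := h1
    refine ⟨z, fun y hy hmem => hz ?_⟩
    simp only [Set.mem_iUnion]
    exact ⟨y, hy, hV₀sub hmem⟩
  -- a small symmetric neighbourhood
  obtain ⟨R, hR, hRmul⟩ := exists_nhds_one_split (inv_mem_nhds_one G hV₀N)
  set W : Set G := R ∩ R⁻¹ with hWdef
  have hWN : W ∈ 𝓝 (1 : G) := Filter.inter_mem hR (inv_mem_nhds_one G hR)
  have hWQ : ∀ w₁ ∈ W, ∀ w₂ ∈ W, w₁⁻¹ * w₂ ∈ V₀⁻¹ := by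
    intro w₁ h₁ w₂ h₂
    have hw₁ : w₁⁻¹ ∈ R := Set.mem_inv.1 h₁.2
    exact hRmul _ hw₁ _ h₂.1
  -- a bump function supported in W
  have hUW : {p : G × G | p.2 / p.1 ∈ W} ∈ 𝓤 G := mem_unif hU hWN
  obtain ⟨u, hu_uc, hu0, hu1, hue, husupp⟩ := exists_unif_bump (1 : G) hUW
  have husupp' : ∀ w : G, u w ≠ 0 → w ∈ W := by
    intro w hw
    by_contra hmem
    refine hw (husupp w ?_)
    simpa using hmem
  have huUb : IsUb u := ⟨hu_uc, 1, fun x => abs_le.2 ⟨by linarith [hu0 x], hu1 x⟩⟩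
  have hrinv := right_invariant_mean hU huniq hm
  set c : ℝ := m u with hc
  -- separated families of arbitrary size
  have hcsep : ∀ n : ℕ, ∃ s : Finset G, s.card = n ∧
      ∀ x ∈ s, ∀ y ∈ s, x ≠ y → ∀ w₁ ∈ W, ∀ w₂ ∈ W, x⁻¹ * y ≠ w₁⁻¹ * w₂ := by
    intro n
    induction n with
    | zero => exact ⟨∅, rfl, by simp⟩
    | succ k ih =>
        obtain ⟨s, hcard, hsep⟩ := ih
        obtain ⟨z, hz⟩ := avoid (s.image (fun b => b⁻¹))
        set a : G := z⁻¹ with hadef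
        have hnew : ∀ b ∈ s, a⁻¹ * b ∉ V₀⁻¹ := by
          intro b hb hmem
          have h1 := hz b⁻¹ (Finset.mem_image_of_mem _ hb)
          apply h1
          rw [div_eq_mul_inv]
          rw [Set.mem_inv] at hmem
          simpa [hadef, mul_inv_rev] using hmem
        have hnew' : ∀ b ∈ s, ∀ w₁ ∈ W, ∀ w₂ ∈ W, a⁻¹ * b ≠ w₁⁻¹ * w₂ := by
          intro b hb w₁ h₁ w₂ h₂ heq
          exact hnew b hb (heq ▸ hWQ w₁ h₁ w₂ h₂)
        have hanotin : a ∉ s := by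
          intro hmem
          refine hnew a hmem ?_
          have h1 : a⁻¹ * a = 1 := inv_mul_cancel a
          rw [h1, Set.mem_inv, inv_one]
          exact mem_of_mem_nhds hV₀N
        refine ⟨insert a s, by rw [Finset.card_insert_of_notMem hanotin, hcard], ?_⟩
        intro x hx y hy hxy
        rcases Finset.mem_insert.1 hx with rfl | hxs
        · rcases Finset.mem_insert.1 hy with rfl | hys
          · exact absurd rfl hxy
          · exact hnew' y hys
        · rcases Finset.mem_insert.1 hy with rfl | hys
          · intro w₁ h₁ w₂ h₂ heq
            have heq' : a⁻¹ * x = w₂⁻¹ * w₁ := by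
              have := congrArg (fun g : G => g⁻¹) heq
              simpa [mul_inv_rev] using this
            exact hnew' x hxs w₂ h₂ w₁ h₁ heq'
          · exact hsep x hxs y hys hxy
  -- the mean of the bump is zero
  have hc0 : c = 0 := by
    have hnonneg : 0 ≤ c := hmPos u huUb hu0
    rcases eq_or_lt_of_le hnonneg with h | hpos
    · exact h.symm
    exfalso
    obtain ⟨n, hn⟩ := exists_nat_gt (1 / c)
    obtain ⟨s, hcard, hsep⟩ := hcsep n
    have hv : ∀ a ∈ s, IsUb (fun x => u (x * a)) := fun a _ => huUb.transRight hU a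
    obtain ⟨hsumUb, hsumval⟩ := meas_finsetSum hmMeas (fun a => fun x => u (x * a)) s hv
    have hsum1 : ∀ x, (∑ a ∈ s, u (x * a)) ≤ 1 := by
      intro x
      by_cases hz : ∀ a ∈ s, u (x * a) = 0
      · rw [Finset.sum_eq_zero hz]
        exact zero_le_one
      · push_neg at hz
        obtain ⟨a₀, ha₀, ha₀ne⟩ := hz
        have hsingle : (∑ a ∈ s, u (x * a)) = u (x * a₀) := by
          refine Finset.sum_eq_single_of_mem a₀ ha₀ ?_
          intro b hb hneq
          by_contra hbne
          have hw₁ : x * b ∈ W := husupp' _ hbne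
          have hw₂ : x * a₀ ∈ W := husupp' _ ha₀ne
          refine hsep b hb a₀ ha₀ hneq (x * b) hw₁ (x * a₀) hw₂ ?_
          simp [mul_inv_rev, mul_assoc]
        rw [hsingle]
        exact hu1 _
    have hle1 : m (fun x => ∑ a ∈ s, u (x * a)) ≤ 1 := by
      have := meas_mono hmMeas hmPos hsumUb (isUb_const 1) hsum1
      rwa [hm1] at this
    have hval : m (fun x => ∑ a ∈ s, u (x * a)) = n * c := by
      rw [hsumval]
      rw [Finset.sum_congr rfl (fun a _ => hrinv a u huUb)]
      rw [Finset.sum_const, hcard]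
      simp [nsmul_eq_mul, ← hc]
    rw [hval] at hle1
    have : (1:ℝ) < n * c := by
      rw [div_lt_iff₀ hpos] at hn
      linarith
    linarith
  -- the approximating family of partial suprema
  set gF : Finset G → G → ℝ := fun F x =>
    (insert (1:G) F).sup' (Finset.insert_nonempty _ _) (fun a => u (x * a)) with hgFdef
  set H : Set (G → ℝ) := {g | ∃ F : Finset G, g = gF F} ∪ {fun _ => (1:ℝ)} with hHdef
  have hgFUb : ∀ F : Finset G, IsUb (gF F) := by
    intro F
    exact isUb_sup' _ _ _ (fun a _ => huUb.transRight hU a)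
  have hgFnn : ∀ (F : Finset G) (x : G), 0 ≤ gF F x := by
    intro F x
    have h1 : u (x * 1) ≤ gF F x :=
      Finset.le_sup' (fun a => u (x * a)) (Finset.mem_insert_self 1 F)
    linarith [hu0 (x * 1)]
  have hgFle1 : ∀ (F : Finset G) (x : G), gF F x ≤ 1 := by
    intro F x
    exact Finset.sup'_le _ _ (fun a _ => hu1 _)
  have hHbdd : ∃ C : ℝ, ∀ f ∈ H, ∀ x, |f x| ≤ C := by
    refine ⟨1, fun f hf x => ?_⟩
    rcases hf with ⟨F, rfl⟩ | hf
    · exact abs_le.2 ⟨by linarith [hgFnn F x], hgFle1 F x⟩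
    · rw [Set.mem_singleton_iff] at hf
      rw [hf]
      norm_num
  have hHequi : H.UniformEquicontinuous := by
    intro Uℝ hUℝ
    obtain ⟨ε, hε, hεU⟩ := Metric.mem_uniformity_dist.1 hUℝ
    obtain ⟨V, hVN, hVp⟩ := (ucr_iff hU).1 hu_uc (ε/2) (by linarith)
    filter_upwards [mem_unif hU hVN] with p hp
    rintro ⟨i, hi⟩
    rcases hi with ⟨F, rfl⟩ | hi
    · apply hεU
      rw [Real.dist_eq]
      have hcomp : ∀ a ∈ insert (1:G) F, |u (p.1 * a) - u (p.2 * a)| ≤ ε/2 := by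
        intro a _
        refine le_of_lt (hVp (p.1 * a) (p.2 * a) ?_)
        have e : (p.2 * a) / (p.1 * a) = p.2 / p.1 := by
          simp [div_eq_mul_inv, mul_inv_rev, mul_assoc]
        rw [e]
        exact hp
      have := abs_sup'_sub_sup'_le (insert (1:G) F) (Finset.insert_nonempty _ _)
        (fun a => u (p.1 * a)) (fun a => u (p.2 * a)) (ε/2) hcomp
      calc |gF F p.1 - gF F p.2| ≤ ε/2 := this
        _ < ε := by linarith
    · rw [Set.mem_singleton_iff] at hi
      subst hi
      apply hεU
      simpa using hε
  have hmgF : ∀ F : Finset G, m (gF F) = 0 := by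
    intro F
    have hge : 0 ≤ m (gF F) := hmPos _ (hgFUb F) (hgFnn F)
    have hv : ∀ a ∈ insert (1:G) F, IsUb (fun x => u (x * a)) :=
      fun a _ => huUb.transRight hU a
    obtain ⟨hsumUb, hsumval⟩ :=
      meas_finsetSum hmMeas (fun a => fun x => u (x * a)) (insert (1:G) F) hv
    have hptle : ∀ x, gF F x ≤ ∑ a ∈ insert (1:G) F, u (x * a) := by
      intro x
      apply Finset.sup'_le
      intro a ha
      exact Finset.single_le_sum (fun b _ => hu0 (x * b)) ha
    have hle : m (gF F) ≤ m (fun x => ∑ a ∈ insert (1:G) F, u (x * a)) :=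
      meas_mono hmMeas hmPos (hgFUb F) hsumUb hptle
    have hval : m (fun x => ∑ a ∈ insert (1:G) F, u (x * a)) = 0 := by
      rw [hsumval]
      rw [Finset.sum_congr rfl (fun a _ => hrinv a u huUb)]
      rw [Finset.sum_const]
      rw [← hc, hc0]
      simp
    linarith [hle, hval ▸ hle]
  -- apply the uniform-measure property at the constant function 1
  have hconstH : (fun _ : G => (1:ℝ)) ∈ H := Set.mem_union_right _ rfl
  obtain ⟨K, δ, hδ, hKprop⟩ := hUM H hHbdd hHequi (fun _ => 1) hconstH (1/2) (by norm_num)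
  set F₀ : Finset G := K.image (fun x => x⁻¹) with hF₀
  have hmemH : gF F₀ ∈ H := Set.mem_union_left _ ⟨F₀, rfl⟩
  have hclose : ∀ x ∈ K, |gF F₀ x - (fun _ : G => (1:ℝ)) x| < δ := by
    intro x hx
    have h2 : (1:ℝ) ≤ gF F₀ x := by
      have hmem : x⁻¹ ∈ insert (1:G) F₀ :=
        Finset.mem_insert_of_mem (Finset.mem_image_of_mem _ hx)
      have h3 := Finset.le_sup' (fun a => u (x * a)) hmem
      have h4 : u (x * x⁻¹) = 1 := by rw [mul_inv_cancel]; exact hue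
      rw [h4] at h3
      exact h3
    have heq : gF F₀ x = 1 := le_antisymm (hgFle1 F₀ x) h2
    rw [heq]
    simpa using hδ
  have hfin := hKprop (gF F₀) hmemH hclose
  rw [hmgF F₀, hm1] at hfin
  norm_num at hfin
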